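/- Let 0 < s < r be integers, let v : ℂ^r → ℂ^s be a surjective linear map, let (w_1,…,w_r) be a basis of ℂ^r, fix 1 ≤ i ≤ r−1, and let W_i denote the span of w_1,…,w_i. Then the set of s-element subsets J ⊆ {1,…,r} such that the family (v(w_j))_{j∈J} is linearly independent is nonempty, and −min{ Σ_{j∈J} γ^{(i)}_j : J ⊆ {1,…,r}, #J = s, (v(w_j))_{j∈J} linearly independent } = i·dim(ker v) − r·dim(W_i ∩ ker v). -/

import Mathlib

open Submodule Module Set

lemma aux_sum_gamma (r i : ℕ) (J : Finset (Fin r)) :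
    ∑ j ∈ J, (if (j : ℕ) < i then (i : ℤ) - r else (i : ℤ)) =
      (i : ℤ) * J.card - (r : ℤ) * (J.filter (fun j : Fin r => (j : ℕ) < i)).card := by
  classical
  rw [Finset.sum_ite, Finset.sum_const, Finset.sum_const]
  have hab := Finset.card_filter_add_card_filter_not
    (s := J) (p := fun j : Fin r => (j : ℕ) < i)
  set a := (J.filter (fun j : Fin r => (j : ℕ) < i)).card with ha
  set b := (J.filter (fun j : Fin r => ¬ (j : ℕ) < i)).card with hb
  rw [← hab]
  push_cast
  ring

lemma aux_card_lt (r i : ℕ) (h : i ≤ r) :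
    (Finset.univ.filter (fun j : Fin r => (j : ℕ) < i)).card = i := by
  classical
  have : Finset.univ.filter (fun j : Fin r => (j : ℕ) < i) =
      (Finset.range i).attachFin (fun m hm => lt_of_lt_of_le (Finset.mem_range.1 hm) h) := by
    ext j; simp [Finset.mem_attachFin]
  rw [this, Finset.card_attachFin, Finset.card_range]

set_option maxHeartbeats 1000000 in
/-- Hilbert–Mumford weight for extension pairs (Plücker point of a surjection
`v : ℂ^r → ℂ^s`): for a basis `(w_1,…,w_r)` of `ℂ^r` and `1 ≤ i ≤ r−1`, the
collection of `s`-element subsets `J` with `(v(w_j))_{j∈J}` linearly independent is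
nonempty, and `−min{ ∑_{j∈J} γ^{(i)}_j : J as above }` equals
`i·dim(ker v) − r·dim(W_i ∩ ker v)`, where `W_i = span(w_1,…,w_i)`
(0-based indexing of `γ^{(i)}`). -/
theorem extension_pair_weight (r s : ℕ) (hs : 0 < s) (hsr : s < r)
    (v : (Fin r → ℂ) →ₗ[ℂ] (Fin s → ℂ)) (hv : Function.Surjective v)
    (w : Basis (Fin r) ℂ (Fin r → ℂ))
    (i : ℕ) (hi1 : 1 ≤ i) (hi2 : i ≤ r - 1) :
    let γ : Fin r → ℤ := fun k => if (k : ℕ) < i then (i : ℤ) - r else (i : ℤ)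
    let W : Submodule ℂ (Fin r → ℂ) := Submodule.span ℂ (⇑w '' {j : Fin r | (j : ℕ) < i})
    (∃ J : Finset (Fin r), J.card = s ∧
        LinearIndependent ℂ (fun j : {x : Fin r // x ∈ J} => v (w j.1))) ∧
    -sInf {m : ℤ | ∃ J : Finset (Fin r), J.card = s ∧
        LinearIndependent ℂ (fun j : {x : Fin r // x ∈ J} => v (w j.1)) ∧
        ∑ j ∈ J, γ j = m} =
      (i : ℤ) * (Module.finrank ℂ (LinearMap.ker v) : ℤ) -
        (r : ℤ) * (Module.finrank ℂ ↥(W ⊓ LinearMap.ker v) : ℤ) := by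
  intro γ W
  classical
  have hγ : γ = fun k : Fin r => if (k : ℕ) < i then (i : ℤ) - r else (i : ℤ) := rfl
  have hW : W = Submodule.span ℂ (⇑w '' {j : Fin r | (j : ℕ) < i}) := rfl
  have hir : i < r := by omega
  set f : Fin r → (Fin s → ℂ) := fun j => v (w j) with hfdef
  set S : Set (Fin r) := {j : Fin r | (j : ℕ) < i} with hSdef
  set d : ℕ := Module.finrank ℂ (Submodule.map v W) with hddef
  -- span of all images is everything
  have hspan_top : Submodule.span ℂ (Set.range f) = ⊤ := by
    have h1 : Set.range f = v '' Set.range ⇑w := by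
      ext x; simp [hfdef]
    rw [h1, ← Submodule.map_span, w.span_eq, Submodule.map_top, LinearMap.range_eq_top.2 hv]
  -- the image of W
  have hmap : Submodule.map v W = Submodule.span ℂ (f '' S) := by
    rw [hW, Submodule.map_span, Set.image_image]
  -- finrank W = i
  have hfinW : Module.finrank ℂ W = i := by
    have hli : LinearIndependent ℂ ((↑) : (⇑w '' S) → (Fin r → ℂ)) :=
      (w.linearIndependent.linearIndepOn S).id_image
    haveI : Fintype ↥(⇑w '' S) := ((S.toFinite.image _)).fintype
    have hst : S.toFinset = Finset.univ.filter (fun j : Fin r => (j : ℕ) < i) := by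
      ext j; simp [hSdef]
    rw [hW, finrank_span_set_eq_card hli, Set.toFinset_image,
      Finset.card_image_of_injective _ w.injective, hst, aux_card_lt r i hir.le]
  -- rank-nullity for the restriction
  have h4 : d + Module.finrank ℂ ↥(W ⊓ LinearMap.ker v) = i := by
    have hrn := LinearMap.finrank_range_add_finrank_ker (v.domRestrict W)
    rw [LinearMap.range_domRestrict] at hrn
    have hker : Module.finrank ℂ ↥(LinearMap.ker (v.domRestrict W)) =
        Module.finrank ℂ ↥(W ⊓ LinearMap.ker v) := by
      rw [LinearMap.ker_domRestrict]
      have hco : Submodule.comap W.subtype (LinearMap.ker v) =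
          Submodule.comap W.subtype (W ⊓ LinearMap.ker v) := by
        rw [Submodule.comap_inf, Submodule.comap_subtype_self, top_inf_eq]
      rw [hco]
      exact (Submodule.comapSubtypeEquivOfLe inf_le_left).finrank_eq
    rw [hker, hfinW] at hrn
    exact hrn
  -- finrank of the kernel
  have h5 : Module.finrank ℂ (LinearMap.ker v) + s = r := by
    have hrn := LinearMap.finrank_range_add_finrank_ker v
    rw [LinearMap.range_eq_top.2 hv, finrank_top] at hrn
    simp only [Module.finrank_fin_fun] at hrn
    omega
  -- upper bound
  have hub : ∀ J : Finset (Fin r),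
      LinearIndependent ℂ (fun j : {x : Fin r // x ∈ J} => v (w j.1)) →
      (J.filter (fun j : Fin r => (j : ℕ) < i)).card ≤ d := by
    intro J hJli
    set J' := J.filter (fun j : Fin r => (j : ℕ) < i) with hJ'def
    have hmono : J' ⊆ J := Finset.filter_subset _ _
    have hinj : Set.InjOn f ↑J := by
      intro a ha b hb hab
      have := LinearIndependent.injective (v := fun j : {x : Fin r // x ∈ J} => f j.1) hJli
        (a₁ := ⟨a, ha⟩) (a₂ := ⟨b, hb⟩) hab
      exact Subtype.ext_iff.1 this
    have hinj' : Set.InjOn f ↑J' := hinj.mono (Finset.coe_subset.2 hmono)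
    have hJ'li : LinearIndependent ℂ (fun j : {x : Fin r // x ∈ J'} => f j.1) := by
      have h := LinearIndependent.comp (v := fun j : {x : Fin r // x ∈ J} => f j.1) hJli
        (fun j : {x : Fin r // x ∈ J'} => (⟨j.1, hmono j.2⟩ : {x : Fin r // x ∈ J}))
        (fun a b hab => Subtype.ext (by simpa using congrArg Subtype.val hab))
      exact h
    have hset : LinearIndependent ℂ ((↑) : (f '' ↑J') → (Fin s → ℂ)) :=
      (linearIndepOn_iff_image hinj').mp hJ'li
    haveI : Fintype ↥(f '' (↑J' : Set (Fin r))) := (((↑J' : Set (Fin r)).toFinite.image _)).fintype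
    have hr1 : Module.finrank ℂ (Submodule.span ℂ (f '' ↑J')) = (f '' (↑J' : Set (Fin r))).toFinset.card :=
      finrank_span_set_eq_card hset
    have hcard : (f '' (↑J' : Set (Fin r))).toFinset.card = J'.card := by
      rw [Set.toFinset_image, Finset.toFinset_coe]
      exact Finset.card_image_of_injOn (by simpa using hinj')
    have hle : Submodule.span ℂ (f '' ↑J') ≤ Submodule.map v W := by
      rw [hmap]
      apply Submodule.span_mono
      apply Set.image_mono
      intro x hx
      have hx' : x ∈ J' := hx
      simp only [hSdef, Set.mem_setOf_eq]
      exact (Finset.mem_filter.1 hx').2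
    calc J'.card = Module.finrank ℂ (Submodule.span ℂ (f '' ↑J')) := by rw [hr1, hcard]
      _ ≤ d := Submodule.finrank_mono hle
  -- existence of a maximizer
  have hex : ∃ J : Finset (Fin r), J.card = s ∧
      LinearIndependent ℂ (fun j : {x : Fin r // x ∈ J} => v (w j.1)) ∧
      (J.filter (fun j : Fin r => (j : ℕ) < i)).card = d := by
    obtain ⟨b, hbS, hbspan, hbli⟩ := exists_linearIndependent ℂ (f '' S)
    have hbr : b ⊆ Set.range f := hbS.trans (Set.image_subset_range f S)
    obtain ⟨c, hcr, hbc, hcspan, hcli⟩ := exists_linearIndepOn_id_extension hbli hbr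
    have hspanc : Submodule.span ℂ c = ⊤ := by
      rw [eq_top_iff, ← hspan_top]
      exact Submodule.span_le.2 hcspan
    have hcfinite : c.Finite := hcli.set_finite_of_isNoetherian
    have hbfinite : b.Finite := hcfinite.subset hbc
    haveI := hcfinite.fintype
    haveI := hbfinite.fintype
    have hccard : c.toFinset.card = s := by
      have h := finrank_span_set_eq_card hcli
      rw [hspanc, finrank_top] at h
      simp only [Module.finrank_fin_fun] at h
      omega
    have hbcard : b.toFinset.card = d := by
      have h := finrank_span_set_eq_card hbli
      rw [hbspan, ← hmap] at h
      omega
    -- section of f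
    set g : (Fin s → ℂ) → Fin r := fun x =>
      if h : ∃ j : Fin r, (j : ℕ) < i ∧ f j = x then h.choose
      else if h2 : ∃ j : Fin r, f j = x then h2.choose else ⟨0, by omega⟩ with hgdef
    have hgc : ∀ x ∈ c, f (g x) = x := by
      intro x hx
      by_cases h : ∃ j : Fin r, (j : ℕ) < i ∧ f j = x
      · simp only [hgdef, dif_pos h]
        exact h.choose_spec.2
      · obtain ⟨j, hj⟩ := hcr hx
        have h2 : ∃ j : Fin r, f j = x := ⟨j, hj⟩
        simp only [hgdef, dif_neg h, dif_pos h2]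
        exact h2.choose_spec
    have hgb : ∀ x ∈ b, ((g x : Fin r) : ℕ) < i := by
      intro x hx
      obtain ⟨j, hjS, hjx⟩ := hbS hx
      have h : ∃ j : Fin r, (j : ℕ) < i ∧ f j = x := ⟨j, hjS, hjx⟩
      simp only [hgdef, dif_pos h]
      exact h.choose_spec.1
    have hginj : Set.InjOn g c := by
      intro x hx y hy hxy
      rw [← hgc x hx, ← hgc y hy, hxy]
    set J := c.toFinset.image g with hJdef
    have hJcard : J.card = s := by
      rw [hJdef, Finset.card_image_of_injOn (by simpa using hginj), hccard]
    have him : f '' (↑J : Set (Fin r)) = c := by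
      ext x
      constructor
      · rintro ⟨j, hj, rfl⟩
        obtain ⟨y, hy, rfl⟩ := Finset.mem_image.1 (by exact_mod_cast hj)
        rw [hgc y (by simpa using hy)]
        simpa using hy
      · intro hx
        exact ⟨g x, by simp [hJdef]; exact ⟨x, hx, rfl⟩, hgc x hx⟩
    have hinjJ : Set.InjOn f ↑J := by
      intro a ha b' hb' hab
      obtain ⟨x, hx, rfl⟩ := Finset.mem_image.1 (by exact_mod_cast ha)
      obtain ⟨y, hy, rfl⟩ := Finset.mem_image.1 (by exact_mod_cast hb')
      rw [hgc x (by simpa using hx), hgc y (by simpa using hy)] at hab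
      rw [hab]
    have hli : LinearIndependent ℂ (fun j : {x : Fin r // x ∈ J} => v (w j.1)) := by
      have := (linearIndepOn_iff_image hinjJ).mpr (him ▸ hcli)
      exact this
    refine ⟨J, hJcard, hli, le_antisymm (hub J hli) ?_⟩
    have hsub : b.toFinset.image g ⊆ J.filter (fun j : Fin r => (j : ℕ) < i) := by
      intro j hj
      obtain ⟨x, hx, rfl⟩ := Finset.mem_image.1 hj
      have hxb : x ∈ b := by simpa using hx
      refine Finset.mem_filter.2 ⟨Finset.mem_image.2 ⟨x, ?_, rfl⟩, hgb x hxb⟩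
      simpa using hbc hxb
    have hbim : (b.toFinset.image g).card = d := by
      rw [Finset.card_image_of_injOn (fun x hx y hy hxy =>
        hginj (hbc (by simpa using hx)) (hbc (by simpa using hy)) hxy), hbcard]
    rw [← hbim]
    exact Finset.card_le_card hsub
  obtain ⟨J₀, hJ₀card, hJ₀li, hJ₀filter⟩ := hex
  refine ⟨⟨J₀, hJ₀card, hJ₀li⟩, ?_⟩
  have hleast : IsLeast {m : ℤ | ∃ J : Finset (Fin r), J.card = s ∧
      LinearIndependent ℂ (fun j : {x : Fin r // x ∈ J} => v (w j.1)) ∧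
      ∑ j ∈ J, γ j = m} ((i : ℤ) * s - (r : ℤ) * d) := by
    constructor
    · exact ⟨J₀, hJ₀card, hJ₀li, by
        rw [hγ, aux_sum_gamma, hJ₀card, hJ₀filter]⟩
    · rintro m ⟨J, hJcard, hJli, rfl⟩
      rw [hγ, aux_sum_gamma, hJcard]
      have hc : ((J.filter (fun j : Fin r => (j : ℕ) < i)).card : ℤ) ≤ d := by
        exact_mod_cast hub J hJli
      have := mul_le_mul_of_nonneg_left hc (by positivity : (0:ℤ) ≤ (r:ℤ))
      linarith
  rw [hleast.csInf_eq]
  have e1 : (Module.finrank ℂ (LinearMap.ker v) : ℤ) = (r : ℤ) - s := by omega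
  have e2 : (Module.finrank ℂ ↥(W ⊓ LinearMap.ker v) : ℤ) = (i : ℤ) - d := by omega
  rw [e1, e2]; ring
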